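/- Under the hypotheses of the previous statement, if additionally |{j ∈ F : h_j ≤ k}| ≤ 2^{k+2} for every k, then for every k < H the total number of indices j with h_j ≤ k is at most (4k+1) · 2^{k+2} ≤ 16 · 4^k. -/

import Mathlib

private lemma aux_find {N : ℕ} (h : Fin N → ℕ) (F : Finset (Fin N)) (H : ℕ)
    (hlocal : ∀ j : Fin N, j ∉ F → h j < H →
      ∃ j' : Fin N, ((j : ℤ) - (j' : ℤ)).natAbs ≤ 2 ∧ h j' < h j) :
    ∀ n, ∀ j : Fin N, h j = n → h j < H →
      ∃ i ∈ F, h i ≤ h j ∧ ((j : ℤ) - (i : ℤ)).natAbs ≤ 2 * h j := by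
  intro n
  induction n using Nat.strong_induction_on with
  | _ n ih =>
    intro j hjn hjH
    by_cases hjF : j ∈ F
    · exact ⟨j, hjF, le_refl _, by simp⟩
    · obtain ⟨j', hd, hlt⟩ := hlocal j hjF hjH
      obtain ⟨i, hiF, hile, hdist⟩ := ih (h j') (hjn ▸ hlt) j' rfl (lt_trans hlt hjH)
      refine ⟨i, hiF, le_trans hile (le_of_lt hlt), ?_⟩
      have tri : ((j : ℤ) - (i : ℤ)).natAbs ≤ ((j : ℤ) - (j' : ℤ)).natAbs + ((j' : ℤ) - (i : ℤ)).natAbs := by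
        have : (j : ℤ) - (i : ℤ) = ((j : ℤ) - (j' : ℤ)) + ((j' : ℤ) - (i : ℤ)) := by ring
        rw [this]; exact Int.natAbs_add_le _ _
      have hj' : h j' + 1 ≤ h j := hlt
      omega

private lemma aux_ball {N : ℕ} (i : Fin N) (r : ℕ) :
    (Finset.univ.filter (fun j : Fin N => ((j : ℤ) - (i : ℤ)).natAbs ≤ r)).card ≤ 2 * r + 1 := by
  have : (Finset.univ.filter (fun j : Fin N => ((j : ℤ) - (i : ℤ)).natAbs ≤ r)).card
      ≤ (Finset.Icc ((i : ℤ) - r) ((i : ℤ) + r)).card := by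
    refine Finset.card_le_card_of_injOn (fun j : Fin N => ((j : ℕ) : ℤ)) ?_ ?_
    · intro j hj
      simp only [Finset.mem_coe, Finset.mem_filter, Finset.mem_univ, true_and] at hj
      simp only [Finset.mem_coe, Finset.mem_Icc]
      omega
    · intro a _ b _ hab
      simp only at hab
      exact Fin.ext (by exact_mod_cast hab)
  rw [Int.card_Icc] at this
  omega

theorem stmt_17 {N : ℕ} (h : Fin N → ℕ) (F : Finset (Fin N)) (H : ℕ)
    (hlocal : ∀ j : Fin N, j ∉ F → h j < H →
      ∃ j' : Fin N, ((j : ℤ) - (j' : ℤ)).natAbs ≤ 2 ∧ h j' < h j)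
    (hF : ∀ k, (F.filter (fun j => h j ≤ k)).card ≤ 2 ^ (k + 2)) :
    ∀ k, k < H →
      (Finset.univ.filter (fun j : Fin N => h j ≤ k)).card ≤ (4 * k + 1) * 2 ^ (k + 2) ∧
      (4 * k + 1) * 2 ^ (k + 2) ≤ 16 * 4 ^ k := by
  intro k hk
  constructor
  · have hsub : (Finset.univ.filter (fun j : Fin N => h j ≤ k)) ⊆
        (F.filter (fun j => h j ≤ k)).biUnion
          (fun i => Finset.univ.filter (fun j : Fin N => ((j : ℤ) - (i : ℤ)).natAbs ≤ 2 * k)) := by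
      intro j hj
      simp only [Finset.mem_filter, Finset.mem_univ, true_and] at hj
      obtain ⟨i, hiF, hile, hdist⟩ := aux_find h F H hlocal (h j) j rfl (lt_of_le_of_lt hj hk)
      rw [Finset.mem_biUnion]
      exact ⟨i, Finset.mem_filter.mpr ⟨hiF, le_trans hile hj⟩,
        Finset.mem_filter.mpr ⟨Finset.mem_univ _, le_trans hdist (by omega)⟩⟩
    calc (Finset.univ.filter (fun j : Fin N => h j ≤ k)).card
        ≤ _ := Finset.card_le_card hsub
      _ ≤ ∑ i ∈ F.filter (fun j => h j ≤ k),
            (Finset.univ.filter (fun j : Fin N => ((j : ℤ) - (i : ℤ)).natAbs ≤ 2 * k)).card :=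
          Finset.card_biUnion_le
      _ ≤ ∑ _i ∈ F.filter (fun j => h j ≤ k), (4 * k + 1) := by
          apply Finset.sum_le_sum
          intro i _
          have := aux_ball i (2 * k)
          omega
      _ = (F.filter (fun j => h j ≤ k)).card * (4 * k + 1) := by rw [Finset.sum_const, smul_eq_mul]
      _ ≤ 2 ^ (k + 2) * (4 * k + 1) := Nat.mul_le_mul_right _ (hF k)
      _ = (4 * k + 1) * 2 ^ (k + 2) := Nat.mul_comm _ _
  · have h1 : 4 * k + 1 ≤ 4 * 2 ^ k := by
      induction k with
      | zero => norm_num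
      | succ n ih =>
        have : (1:ℕ) ≤ 2 ^ n := Nat.one_le_two_pow
        rw [pow_succ]; omega
    calc (4 * k + 1) * 2 ^ (k + 2) ≤ 4 * 2 ^ k * 2 ^ (k + 2) := Nat.mul_le_mul_right _ h1
      _ = 16 * 4 ^ k := by
        have h4 : (4:ℕ) ^ k = 2 ^ k * 2 ^ k := by
          rw [show (4:ℕ) = 2 * 2 from rfl, mul_pow]
        rw [h4, pow_add]; ring
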